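/- (Width necessity under the Euclidean norm: first-layer collision) Let d, N, m be positive integers with 2 ≤ N and N − 1 ≤ d, let ρ ∈ (0, 1), and let W : ℝ^d → ℝ^m be any linear map with m < ρ²·(N − 1). Then there exist an index j ∈ {1, …, N − 1} and points x, x' ∈ ℝ^d such that ‖x − e_j‖₂ < ρ/2, ‖x'‖₂ < ρ/2, and W x = W x'. (Equivalently, some point of the open Euclidean ball B₂(e_j, ρ/2) and some point of B₂(0, ρ/2) are mapped to the same value by W, so W cannot separate these two balls.) -/

import Mathlib

open Module

/-- **Width necessity under the Euclidean norm: first-layer collision.**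
If `2 ≤ N`, `N - 1 ≤ d`, `ρ ∈ (0,1)`, and `W : ℝ^d → ℝ^m` is linear with
`m < ρ²(N-1)`, then some point of the open Euclidean ball `B₂(e_j, ρ/2)` (for some
`j ∈ {1,…,N-1}`) and some point of `B₂(0, ρ/2)` are mapped to the same value by `W`. -/
theorem width_necessity_euclidean
    (d N m : ℕ) (hd : 1 ≤ d) (hm0 : 1 ≤ m) (hN : 2 ≤ N) (hNd : N - 1 ≤ d)
    (ρ : ℝ) (hρ0 : 0 < ρ) (hρ1 : ρ < 1)
    (W : EuclideanSpace ℝ (Fin d) →ₗ[ℝ] EuclideanSpace ℝ (Fin m))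
    (hm : (m : ℝ) < ρ ^ 2 * ((N : ℝ) - 1)) :
    ∃ j : Fin d, (j : ℕ) < N - 1 ∧
      ∃ x x' : EuclideanSpace ℝ (Fin d),
        ‖x - EuclideanSpace.single j 1‖ < ρ / 2 ∧ ‖x'‖ < ρ / 2 ∧ W x = W x' := by
  classical
  set K := LinearMap.ker W with hK
  -- finrank bound
  have hfr : finrank ℝ Kᗮ ≤ m := by
    have hE : finrank ℝ (EuclideanSpace ℝ (Fin d)) = d := finrank_euclideanSpace_fin
    have h1 : finrank ℝ (LinearMap.ker W) + finrank ℝ Kᗮ = finrank ℝ (EuclideanSpace ℝ (Fin d)) :=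
      Submodule.finrank_add_finrank_orthogonal K
    have h2 := LinearMap.finrank_range_add_finrank_ker W
    rw [hE] at h1 h2
    have h3 : finrank ℝ (LinearMap.range W) ≤ m := by
      have := Submodule.finrank_le (LinearMap.range W)
      simpa [finrank_euclideanSpace_fin] using this
    omega
  set r := finrank ℝ Kᗮ with hr
  let b : OrthonormalBasis (Fin r) ℝ Kᗮ := stdOrthonormalBasis ℝ Kᗮ
  -- norm of projection via coordinates
  have hnorm : ∀ x : EuclideanSpace ℝ (Fin d), ‖(Kᗮ.orthogonalProjectionOnto x : EuclideanSpace ℝ (Fin d))‖ ^ 2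
      = ∑ i : Fin r, (inner ℝ (b i : EuclideanSpace ℝ (Fin d)) x : ℝ) ^ 2 := by
    intro x
    have h1 : ‖(Kᗮ.orthogonalProjectionOnto x : EuclideanSpace ℝ (Fin d))‖ = ‖b.repr (Kᗮ.orthogonalProjectionOnto x)‖ := by
      simp
    rw [h1, EuclideanSpace.norm_eq, Real.sq_sqrt (by positivity)]
    refine Finset.sum_congr rfl fun i _ => ?_
    rw [b.repr_apply_apply, Submodule.inner_orthogonalProjectionOnto_eq_of_mem_left]
    simp [Real.norm_eq_abs, sq_abs]
  -- total sum over all basis vectors equals r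
  have hsum : ∑ j : Fin d, ‖(Kᗮ.orthogonalProjectionOnto (EuclideanSpace.single j 1) : EuclideanSpace ℝ (Fin d))‖ ^ 2
      = (r : ℝ) := by
    simp_rw [hnorm]
    rw [Finset.sum_comm]
    have : ∀ i : Fin r, ∑ j : Fin d,
        (inner ℝ (b i : EuclideanSpace ℝ (Fin d)) (EuclideanSpace.single j 1) : ℝ) ^ 2 = 1 := by
      intro i
      have h2 : ∑ j : Fin d, ‖(b i : EuclideanSpace ℝ (Fin d)) j‖ ^ 2 = 1 := by
        have hb : Real.sqrt (∑ j : Fin d, ‖(b i : EuclideanSpace ℝ (Fin d)) j‖ ^ 2) = 1 := by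
          rw [← EuclideanSpace.norm_eq]
          exact b.orthonormal.1 i
        rwa [Real.sqrt_eq_one] at hb
      calc ∑ j : Fin d, (inner ℝ (b i : EuclideanSpace ℝ (Fin d)) (EuclideanSpace.single j 1) : ℝ) ^ 2
          = ∑ j : Fin d, ‖(b i : EuclideanSpace ℝ (Fin d)) j‖ ^ 2 := by
            refine Finset.sum_congr rfl fun j _ => ?_
            rw [EuclideanSpace.inner_single_right]
            simp [Real.norm_eq_abs, sq_abs]
        _ = 1 := h2
    rw [Finset.sum_congr rfl fun i _ => this i]
    simp
  -- pigeonhole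
  have hN1 : 0 < N - 1 := by omega
  let f : Fin (N - 1) → Fin d := Fin.castLE hNd
  have hfinj : Function.Injective f := Fin.castLE_injective hNd
  have hsub : ∑ i : Fin (N - 1),
      ‖(Kᗮ.orthogonalProjectionOnto (EuclideanSpace.single (f i) 1) : EuclideanSpace ℝ (Fin d))‖ ^ 2 ≤ (r : ℝ) := by
    rw [← hsum]
    have hmap : ∑ i : Fin (N - 1),
        ‖(Kᗮ.orthogonalProjectionOnto (EuclideanSpace.single (f i) 1) : EuclideanSpace ℝ (Fin d))‖ ^ 2
        = ∑ j ∈ Finset.univ.map ⟨f, hfinj⟩,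
        ‖(Kᗮ.orthogonalProjectionOnto (EuclideanSpace.single j 1) : EuclideanSpace ℝ (Fin d))‖ ^ 2 := by
      rw [Finset.sum_map]; rfl
    rw [hmap]
    exact Finset.sum_le_sum_of_subset_of_nonneg (Finset.subset_univ _)
      (fun j _ _ => by positivity)
  have hex : ∃ i : Fin (N - 1),
      ‖(Kᗮ.orthogonalProjectionOnto (EuclideanSpace.single (f i) 1) : EuclideanSpace ℝ (Fin d))‖ ^ 2 < ρ ^ 2 := by
    by_contra h
    push_neg at h
    have hge : ((N - 1 : ℕ) : ℝ) * ρ ^ 2 ≤ ∑ i : Fin (N - 1),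
        ‖(Kᗮ.orthogonalProjectionOnto (EuclideanSpace.single (f i) 1) : EuclideanSpace ℝ (Fin d))‖ ^ 2 := by
      calc ((N - 1 : ℕ) : ℝ) * ρ ^ 2 = ∑ _i : Fin (N - 1), ρ ^ 2 := by
            simp [mul_comm]
        _ ≤ _ := Finset.sum_le_sum fun i _ => h i
    have hcast : ((N - 1 : ℕ) : ℝ) = (N : ℝ) - 1 := by
      have : (1 : ℕ) ≤ N := by omega
      push_cast [Nat.cast_sub this]
      ring
    have : ρ ^ 2 * ((N : ℝ) - 1) ≤ (m : ℝ) := by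
      calc ρ ^ 2 * ((N : ℝ) - 1) = ((N - 1 : ℕ) : ℝ) * ρ ^ 2 := by rw [hcast]; ring
        _ ≤ (r : ℝ) := le_trans hge hsub
        _ ≤ (m : ℝ) := by exact_mod_cast hfr
    linarith
  obtain ⟨i0, hi0⟩ := hex
  refine ⟨f i0, by simpa [f] using i0.2, ?_⟩
  set q : EuclideanSpace ℝ (Fin d) := (Kᗮ.orthogonalProjectionOnto (EuclideanSpace.single (f i0) 1) : EuclideanSpace ℝ (Fin d)) with hq
  have hqn : ‖q‖ < ρ := lt_of_pow_lt_pow_left₀ 2 hρ0.le hi0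
  refine ⟨EuclideanSpace.single (f i0) 1 - (1/2 : ℝ) • q, (1/2 : ℝ) • q, ?_, ?_, ?_⟩
  · rw [sub_sub_cancel_left, norm_neg, norm_smul, Real.norm_eq_abs,
      abs_of_nonneg (by norm_num : (0:ℝ) ≤ 1/2)]
    linarith
  · rw [norm_smul, Real.norm_eq_abs, abs_of_nonneg (by norm_num : (0:ℝ) ≤ 1/2)]
    linarith
  · have hker : EuclideanSpace.single (f i0) 1 - q ∈ K := by
      have := Submodule.sub_starProjection_mem_orthogonal (K := Kᗮ)
        (EuclideanSpace.single (f i0) 1)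
      rwa [Submodule.orthogonal_orthogonal] at this
    have h0 : W (EuclideanSpace.single (f i0) 1 - q) = 0 := by
      rwa [← LinearMap.mem_ker]
    have : EuclideanSpace.single (f i0) 1 - (1/2 : ℝ) • q - (1/2 : ℝ) • q
        = EuclideanSpace.single (f i0) 1 - q := by
      rw [sub_sub, ← add_smul]; norm_num
    calc W (EuclideanSpace.single (f i0) 1 - (1/2 : ℝ) • q)
        = W ((1/2 : ℝ) • q) + W (EuclideanSpace.single (f i0) 1 - q) := by
          rw [← map_add]; congr 1; rw [← this]; abel
      _ = W ((1/2 : ℝ) • q) := by rw [h0, add_zero]
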